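/- Fix $u,v\in\mathbb{R}$, $\rho\in[-1,1]$, $\xi>0$, $\theta,V_0\ge 0$. For $\epsilon>0$ define $d_\epsilon := \sqrt{(1-i\rho\epsilon^{1/2+H}\xi u)^2 - 2(\epsilon^{1/2+H}\xi)^2(iv-\frac{u^2+iu}{2})}$ (principal square root). In the Black–Scholes regime $H>-1/2$, show that the Heston exponent converges: $(\epsilon^{-1/2-H}\theta+\epsilon^{-1-2H}V_0)\xi^{-2}\left((1-i\rho\epsilon^{1/2+H}\xi u-d_\epsilon)T - 2\epsilon\ln\frac{1-g_\epsilon e^{-Td_\epsilon/\epsilon}}{1-g_\epsilon}\right) \to -\frac{V_0}{2}(u^2 - 2i(v-\frac{u}{2}))T$ as $\epsilon\to 0$, where $g_\epsilon=(1-i\rho\epsilon^{1/2+H}\xi u-d_\epsilon)/(1-i\rho\epsilon^{1/2+H}\xi u+d_\epsilon)$. -/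

import Mathlib

open Complex Filter Set

/-- `d_ε` from the explicit Heston characteristic function (principal square root). -/
noncomputable def dEps (H ξ ρ u v ε : ℝ) : ℂ :=
  ((1 - I * (ρ:ℂ) * ((ε ^ ((1:ℝ)/2 + H) : ℝ) : ℂ) * (ξ:ℂ) * (u:ℂ))^2
    - 2 * (((ε ^ ((1:ℝ)/2 + H) : ℝ) : ℂ) * (ξ:ℂ))^2
        * (I * (v:ℂ) - ((u:ℂ)^2 + I * (u:ℂ)) / 2)) ^ ((1:ℂ)/2)

/-- `g_ε` from the explicit Heston characteristic function. -/
noncomputable def gEps (H ξ ρ u v ε : ℝ) : ℂ :=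
  (1 - I * (ρ:ℂ) * ((ε ^ ((1:ℝ)/2 + H) : ℝ) : ℂ) * (ξ:ℂ) * (u:ℂ) - dEps H ξ ρ u v ε)
    / (1 - I * (ρ:ℂ) * ((ε ^ ((1:ℝ)/2 + H) : ℝ) : ℂ) * (ξ:ℂ) * (u:ℂ) + dEps H ξ ρ u v ε)

/-- Difference quotient of `Complex.log` at `1`, extended by its limit value `1`. -/
noncomputable def philog (z : ℂ) : ℂ := if z = 1 then 1 else Complex.log z / (z - 1)

lemma log_eq_philog (z : ℂ) : Complex.log z = philog z * (z - 1) := by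
  unfold philog
  split_ifs with h
  · simp [h]
  · rw [div_mul_cancel₀ _ (sub_ne_zero.mpr h)]

lemma tendsto_philog : Tendsto philog (nhds 1) (nhds 1) := by
  have h1 : HasDerivAt Complex.log 1 1 := by
    simpa using Complex.hasDerivAt_log Complex.one_mem_slitPlane
  rw [hasDerivAt_iff_tendsto_slope] at h1
  have h2 : Tendsto philog (nhdsWithin (1:ℂ) {(1:ℂ)}ᶜ) (nhds 1) := by
    refine h1.congr' ?_
    filter_upwards [self_mem_nhdsWithin] with z hz
    simp only [Set.mem_compl_iff, Set.mem_singleton_iff] at hz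
    rw [slope_def_field, philog, if_neg hz, Complex.log_one, sub_zero]
  have h3 : Tendsto philog (pure (1:ℂ)) (nhds 1) := by
    have hv : philog 1 = 1 := by simp [philog]
    simpa [hv] using tendsto_pure_nhds philog 1
  have h4 := h2.sup h3
  rwa [nhdsNE_sup_pure] at h4

/-- `w_ε = 1 - iρ ε^{1/2+H} ξ u`. -/
noncomputable def wE (H ξ ρ u : ℝ) (ε : ℝ) : ℂ :=
  1 - I * (ρ:ℂ) * ((ε ^ ((1:ℝ)/2 + H) : ℝ) : ℂ) * (ξ:ℂ) * (u:ℂ)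

/-- `δ_ε = ε^{1/2+H} ξ` as a complex number. -/
noncomputable def dl (H ξ : ℝ) (ε : ℝ) : ℂ := ((ε ^ ((1:ℝ)/2 + H) : ℝ) : ℂ) * (ξ:ℂ)

/-- `b = iv - (u² + iu)/2`. -/
noncomputable def bC (u v : ℝ) : ℂ := I * (v:ℂ) - ((u:ℂ)^2 + I * (u:ℂ)) / 2

lemma dEps_def (H ξ ρ u v ε : ℝ) :
    dEps H ξ ρ u v ε = ((wE H ξ ρ u ε)^2 - 2 * (dl H ξ ε)^2 * bC u v) ^ ((1:ℂ)/2) := rfl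

lemma gEps_def (H ξ ρ u v ε : ℝ) :
    gEps H ξ ρ u v ε = (wE H ξ ρ u ε - dEps H ξ ρ u v ε)
      / (wE H ξ ρ u ε + dEps H ξ ρ u v ε) := rfl

/-- In the regime `H > -1/2`, the reversionary Heston characteristic exponent
converges to the Black–Scholes exponent as `ε → 0⁺`. -/
theorem stmt18 (u v ρ ξ θ V0 T H : ℝ) (hρ : ρ ∈ Icc (-1:ℝ) 1) (hξ : 0 < ξ)
    (hθ : 0 ≤ θ) (hV0 : 0 ≤ V0) (hT : 0 < T) (hH : -(1:ℝ)/2 < H) :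
    Tendsto (fun ε : ℝ =>
      (((ε ^ (-(1:ℝ)/2 - H) * θ + ε ^ (-1 - 2*H) * V0 : ℝ)) : ℂ) * ((ξ:ℂ)^2)⁻¹
        * ((1 - I * (ρ:ℂ) * ((ε ^ ((1:ℝ)/2 + H) : ℝ) : ℂ) * (ξ:ℂ) * (u:ℂ)
              - dEps H ξ ρ u v ε) * (T:ℂ)
            - 2 * (ε:ℂ) * Complex.log
                ((1 - gEps H ξ ρ u v ε * Complex.exp (-(T:ℂ) * dEps H ξ ρ u v ε / (ε:ℂ)))
                  / (1 - gEps H ξ ρ u v ε))))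
      (nhdsWithin 0 (Ioi 0))
      (nhds (-(((V0:ℝ) : ℂ) / 2) * ((u:ℂ)^2 - 2 * I * ((v:ℂ) - (u:ℂ)/2)) * (T:ℂ))) := by
  have hp : (0:ℝ) < (1:ℝ)/2 + H := by linarith
  set l : Filter ℝ := nhdsWithin 0 (Ioi 0) with hl
  -- ε^(1/2+H) → 0
  have hρw : Tendsto (fun ε : ℝ => ε ^ ((1:ℝ)/2 + H)) l (nhds 0) := by
    have h := (Real.continuousAt_rpow_const 0 ((1:ℝ)/2 + H) (Or.inr hp.le)).tendsto
    rw [Real.zero_rpow hp.ne'] at h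
    exact h.mono_left nhdsWithin_le_nhds
  have hcast : Tendsto (fun ε : ℝ => ((ε ^ ((1:ℝ)/2 + H) : ℝ) : ℂ)) l (nhds 0) := by
    simpa [Function.comp_def] using (Complex.continuous_ofReal.tendsto 0).comp hρw
  have hδ : Tendsto (fun ε : ℝ => dl H ξ ε) l (nhds 0) := by
    simpa [dl] using hcast.mul_const (ξ:ℂ)
  have hw : Tendsto (fun ε : ℝ => wE H ξ ρ u ε) l (nhds 1) := by
    have h0 : Tendsto (fun ε : ℝ =>
        I * (ρ:ℂ) * ((ε ^ ((1:ℝ)/2 + H) : ℝ) : ℂ) * (ξ:ℂ) * (u:ℂ)) l (nhds 0) := by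
      simpa [mul_assoc] using ((hcast.const_mul (I * (ρ:ℂ))).mul_const (ξ:ℂ)).mul_const (u:ℂ)
    simpa [wE] using tendsto_const_nhds.sub h0
  have hz : Tendsto (fun ε : ℝ => (wE H ξ ρ u ε)^2 - 2 * (dl H ξ ε)^2 * bC u v) l (nhds 1) := by
    have h := (hw.pow 2).sub (((hδ.pow 2).const_mul 2).mul_const (bC u v))
    simpa using h
  have hd : Tendsto (fun ε : ℝ => dEps H ξ ρ u v ε) l (nhds 1) := by
    have hc : ContinuousAt (fun z : ℂ => z ^ ((1:ℂ)/2)) 1 :=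
      continuousAt_cpow_const Complex.one_mem_slitPlane
    have h := hc.tendsto.comp hz
    simp only [Complex.one_cpow] at h
    simpa [dEps_def, Function.comp_def] using h
  have hwd : Tendsto (fun ε : ℝ => wE H ξ ρ u ε + dEps H ξ ρ u v ε) l (nhds 2) := by
    simpa [one_add_one_eq_two] using hw.add hd
  have hg : Tendsto (fun ε : ℝ => gEps H ξ ρ u v ε) l (nhds 0) := by
    have h := (hw.sub hd).div hwd two_ne_zero
    simpa [gEps_def, Pi.div_def] using h
  -- the exponential term → 0
  have hE : Tendsto (fun ε : ℝ =>
      Complex.exp (-(T:ℂ) * dEps H ξ ρ u v ε / (ε:ℂ))) l (nhds 0) := by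
    rw [tendsto_zero_iff_norm_tendsto_zero]
    have hre : Tendsto (fun ε : ℝ => (dEps H ξ ρ u v ε).re) l (nhds 1) := by
      simpa [Function.comp_def] using (Complex.continuous_re.tendsto 1).comp hd
    have hhalf : ∀ᶠ ε in l, (1:ℝ)/2 ≤ (dEps H ξ ρ u v ε).re :=
      hre.eventually (eventually_ge_nhds (by norm_num))
    have hbound : Tendsto (fun ε : ℝ => -T/2 * ε⁻¹) l atBot :=
      Tendsto.const_mul_atTop_of_neg (by linarith) tendsto_inv_nhdsGT_zero
    have hkey : Tendsto (fun ε : ℝ => (-(T:ℂ) * dEps H ξ ρ u v ε / (ε:ℂ)).re) l atBot := by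
      refine tendsto_atBot_mono' l ?_ hbound
      filter_upwards [hhalf, self_mem_nhdsWithin] with ε h1 h2
      have hε : (0:ℝ) < ε := h2
      have e : -(T:ℂ) * dEps H ξ ρ u v ε / (ε:ℂ)
          = ((-T/ε : ℝ):ℂ) * dEps H ξ ρ u v ε := by push_cast; ring
      rw [e, Complex.re_ofReal_mul]
      have hi : (0:ℝ) < ε⁻¹ := inv_pos.mpr hε
      have hfac : 0 ≤ T * ε⁻¹ * ((dEps H ξ ρ u v ε).re - 1/2) :=
        mul_nonneg (mul_nonneg hT.le hi.le) (by linarith)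
      have : -T/ε = -T * ε⁻¹ := by rw [div_eq_mul_inv]
      rw [this]
      nlinarith [hfac]
    have h := Real.tendsto_exp_atBot.comp hkey
    refine h.congr fun ε => ?_
    simp [Complex.norm_exp, Function.comp]
  -- Q → 1 and philog Q → 1
  have hQ : Tendsto (fun ε : ℝ =>
      (1 - gEps H ξ ρ u v ε * Complex.exp (-(T:ℂ) * dEps H ξ ρ u v ε / (ε:ℂ)))
        / (1 - gEps H ξ ρ u v ε)) l (nhds 1) := by
    have h := ((tendsto_const_nhds (x := (1:ℂ))).sub (hg.mul hE)).div
      ((tendsto_const_nhds (x := (1:ℂ))).sub hg) (by norm_num : (1:ℂ) - 0 ≠ 0)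
    simpa [Pi.div_def] using h
  have hφQ : Tendsto (fun ε : ℝ => philog
      ((1 - gEps H ξ ρ u v ε * Complex.exp (-(T:ℂ) * dEps H ξ ρ u v ε / (ε:ℂ)))
        / (1 - gEps H ξ ρ u v ε))) l (nhds 1) := tendsto_philog.comp hQ
  -- c_ε → V0
  have hc : Tendsto (fun ε : ℝ => ((θ * ε ^ ((1:ℝ)/2 + H) + V0 : ℝ):ℂ)) l (nhds (V0:ℂ)) := by
    have h : Tendsto (fun ε : ℝ => θ * ε ^ ((1:ℝ)/2 + H) + V0) l (nhds V0) := by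
      simpa using (hρw.const_mul θ).add_const V0
    exact (Complex.continuous_ofReal.tendsto V0).comp h
  -- eventual nonvanishing
  have hz0 : ∀ᶠ ε in l, (wE H ξ ρ u ε)^2 - 2 * (dl H ξ ε)^2 * bC u v ≠ 0 :=
    hz.eventually_ne one_ne_zero
  have hwd0 : ∀ᶠ ε in l, wE H ξ ρ u ε + dEps H ξ ρ u v ε ≠ 0 :=
    hwd.eventually_ne two_ne_zero
  have hg0 : ∀ᶠ ε in l, (1:ℂ) - gEps H ξ ρ u v ε ≠ 0 :=
    (tendsto_const_nhds.sub hg).eventually_ne (by norm_num)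
  have hd2 : ∀ᶠ ε in l, (dEps H ξ ρ u v ε)^2
      = (wE H ξ ρ u ε)^2 - 2 * (dl H ξ ε)^2 * bC u v := by
    filter_upwards [hz0] with ε h0
    rw [dEps_def, sq, ← Complex.cpow_add _ _ h0]
    norm_num
  -- the prefactor times δ² identity
  have hPδ : ∀ ε : ℝ, 0 < ε →
      (((ε ^ (-(1:ℝ)/2 - H) * θ + ε ^ (-1 - 2*H) * V0 : ℝ)) : ℂ) * ((ξ:ℂ)^2)⁻¹
        * (dl H ξ ε)^2 = ((θ * ε ^ ((1:ℝ)/2 + H) + V0 : ℝ):ℂ) := by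
    intro ε hε
    have e1 : ε ^ (-(1:ℝ)/2 - H) * ε ^ ((1:ℝ)/2 + H) = 1 := by
      rw [← Real.rpow_add hε]; norm_num
    have e2 : ε ^ (-1 - 2*H) * (ε ^ ((1:ℝ)/2 + H) * ε ^ ((1:ℝ)/2 + H)) = 1 := by
      rw [← Real.rpow_add hε, ← Real.rpow_add hε,
        show (-1 - 2*H + ((1:ℝ)/2 + H + ((1:ℝ)/2 + H))) = 0 by ring, Real.rpow_zero]
    have c1 := congrArg (Complex.ofReal) e1
    have c2 := congrArg (Complex.ofReal) e2
    push_cast at c1 c2 ⊢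
    have hξc : (ξ:ℂ) ≠ 0 := Complex.ofReal_ne_zero.mpr hξ.ne'
    have hinv : ((ξ:ℂ)^2)⁻¹ * (ξ:ℂ)^2 = 1 := inv_mul_cancel₀ (pow_ne_zero 2 hξc)
    unfold dl
    push_cast
    linear_combination
      ((((ε ^ (-(1:ℝ)/2 - H) : ℝ):ℂ) * (θ:ℂ) + ((ε ^ (-1 - 2*H) : ℝ):ℂ) * (V0:ℂ))
        * (((ε ^ ((1:ℝ)/2 + H) : ℝ):ℂ))^2) * hinv
      + ((θ:ℂ) * ((ε ^ ((1:ℝ)/2 + H) : ℝ):ℂ)) * c1 + (V0:ℂ) * c2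
  -- the two limit pieces
  have hG1 : Tendsto (fun ε : ℝ => ((θ * ε ^ ((1:ℝ)/2 + H) + V0 : ℝ):ℂ)
      * (2 * bC u v / (wE H ξ ρ u ε + dEps H ξ ρ u v ε)) * (T:ℂ)) l
      (nhds ((V0:ℂ) * bC u v * (T:ℂ))) := by
    have h := (hc.mul ((tendsto_const_nhds (x := 2 * bC u v)).div hwd two_ne_zero)).mul_const (T:ℂ)
    have e : (V0:ℂ) * (2 * bC u v / 2) * (T:ℂ) = (V0:ℂ) * bC u v * (T:ℂ) := by ring
    rwa [e] at h
  have hG2 : Tendsto (fun ε : ℝ => 2 * (ε:ℂ) * philog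
      ((1 - gEps H ξ ρ u v ε * Complex.exp (-(T:ℂ) * dEps H ξ ρ u v ε / (ε:ℂ)))
        / (1 - gEps H ξ ρ u v ε))
      * (((θ * ε ^ ((1:ℝ)/2 + H) + V0 : ℝ):ℂ)
          * (2 * bC u v / (wE H ξ ρ u ε + dEps H ξ ρ u v ε)^2)
          * ((1 - Complex.exp (-(T:ℂ) * dEps H ξ ρ u v ε / (ε:ℂ)))
              / (1 - gEps H ξ ρ u v ε)))) l (nhds 0) := by
    have hεc : Tendsto (fun ε : ℝ => 2 * (ε:ℂ)) l (nhds 0) := by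
      have h0 : Tendsto (fun ε : ℝ => (ε:ℂ)) l (nhds 0) :=
        (Complex.continuous_ofReal.tendsto 0).mono_left nhdsWithin_le_nhds
      simpa using h0.const_mul 2
    have hrest : Tendsto (fun ε : ℝ =>
        ((θ * ε ^ ((1:ℝ)/2 + H) + V0 : ℝ):ℂ)
          * (2 * bC u v / (wE H ξ ρ u ε + dEps H ξ ρ u v ε)^2)
          * ((1 - Complex.exp (-(T:ℂ) * dEps H ξ ρ u v ε / (ε:ℂ)))
              / (1 - gEps H ξ ρ u v ε))) l
        (nhds ((V0:ℂ) * (2 * bC u v / 2^2) * ((1 - 0)/(1 - 0)))) :=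
      (hc.mul (tendsto_const_nhds.div (hwd.pow 2) (by norm_num))).mul
        ((tendsto_const_nhds.sub hE).div (tendsto_const_nhds.sub hg) (by norm_num))
    simpa using (hεc.mul hφQ).mul hrest
  -- assemble
  have hlim : (V0:ℂ) * bC u v * (T:ℂ) - 0
      = -(((V0:ℝ) : ℂ) / 2) * ((u:ℂ)^2 - 2 * I * ((v:ℂ) - (u:ℂ)/2)) * (T:ℂ) := by
    unfold bC; ring
  rw [← hlim]
  refine Tendsto.congr' ?_ (hG1.sub hG2)
  filter_upwards [hd2, hwd0, hg0, self_mem_nhdsWithin] with ε h2 hne hgne hε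
  have hεpos : (0:ℝ) < ε := hε
  set w := wE H ξ ρ u ε
  set d := dEps H ξ ρ u v ε
  set g := gEps H ξ ρ u v ε
  set E := Complex.exp (-(T:ℂ) * d / (ε:ℂ))
  set c := ((θ * ε ^ ((1:ℝ)/2 + H) + V0 : ℝ):ℂ)
  set P := (((ε ^ (-(1:ℝ)/2 - H) * θ + ε ^ (-1 - 2*H) * V0 : ℝ)) : ℂ) * ((ξ:ℂ)^2)⁻¹
  have hsub : w - d = 2 * (dl H ξ ε)^2 * bC u v / (w + d) := by
    rw [eq_div_iff hne]
    linear_combination -h2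
  have hgval : g = 2 * (dl H ξ ε)^2 * bC u v / (w + d)^2 := by
    rw [show g = (w - d) / (w + d) from rfl, hsub, div_div, ← sq]
  have hPδ' : P * (dl H ξ ε)^2 = c := hPδ ε hεpos
  have eq1 : P * (w - d) = c * (2 * bC u v / (w + d)) := by
    calc P * (w - d) = P * (2 * (dl H ξ ε)^2 * bC u v / (w + d)) := by rw [hsub]
      _ = (P * (dl H ξ ε)^2) * (2 * bC u v) / (w + d) := by ring
      _ = c * (2 * bC u v) / (w + d) := by rw [hPδ']
      _ = c * (2 * bC u v / (w + d)) := by rw [mul_div_assoc]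
  have hQm1 : (1 - g * E) / (1 - g) - 1 = g * (1 - E) / (1 - g) := by
    rw [div_sub_one hgne]
    congr 1
    ring
  have eq2 : P * ((1 - g * E) / (1 - g) - 1)
      = c * (2 * bC u v / (w + d)^2) * ((1 - E) / (1 - g)) := by
    calc P * ((1 - g * E) / (1 - g) - 1) = P * (g * ((1 - E) / (1 - g))) := by
          rw [hQm1]; ring
      _ = (P * (2 * (dl H ξ ε)^2 * bC u v / (w + d)^2)) * ((1 - E) / (1 - g)) := by
          rw [← hgval]; ring
      _ = ((P * (dl H ξ ε)^2) * (2 * bC u v) / (w + d)^2) * ((1 - E) / (1 - g)) := by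
          ring
      _ = (c * (2 * bC u v) / (w + d)^2) * ((1 - E) / (1 - g)) := by rw [hPδ']
      _ = c * (2 * bC u v / (w + d)^2) * ((1 - E) / (1 - g)) := by rw [mul_div_assoc]
  show c * (2 * bC u v / (w + d)) * (T:ℂ)
      - 2 * (ε:ℂ) * philog ((1 - g * E) / (1 - g))
        * (c * (2 * bC u v / (w + d)^2) * ((1 - E) / (1 - g)))
    = P * ((w - d) * (T:ℂ) - 2 * (ε:ℂ) * Complex.log ((1 - g * E) / (1 - g)))
  rw [log_eq_philog]
  calc c * (2 * bC u v / (w + d)) * (T:ℂ)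
      - 2 * (ε:ℂ) * philog ((1 - g * E) / (1 - g))
        * (c * (2 * bC u v / (w + d)^2) * ((1 - E) / (1 - g)))
      = (P * (w - d)) * (T:ℂ)
        - 2 * (ε:ℂ) * philog ((1 - g * E) / (1 - g))
          * (P * ((1 - g * E) / (1 - g) - 1)) := by rw [eq1, eq2]
    _ = P * ((w - d) * (T:ℂ) - 2 * (ε:ℂ)
          * (philog ((1 - g * E) / (1 - g)) * ((1 - g * E) / (1 - g) - 1))) := by ring
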